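/- Removing an isolated clique from an instance of Cluster Editing with Vertex Splitting yields an equivalent instance: (G, k) is a yes-instance iff (G − C, k) is, where C is a connected component of G inducing a complete graph. -/

import Mathlib

open scoped Classical

/-- The cluster graph determined by a covering `C` of the vertex set: two distinct
vertices are adjacent iff they lie in a common set of `C`. -/
def clusterGraphOf {V : Type*} (C : Finset (Finset V)) : SimpleGraph V :=
  SimpleGraph.fromRel (fun u v => ∃ S ∈ C, u ∈ S ∧ v ∈ S)

/-- The number of vertex splittings needed to realize the covering `C`: a vertex
occurring in `m` clusters must be split `m - 1` times. -/
noncomputable def splitCost {V : Type*} [Fintype V] (C : Finset (Finset V)) : ℕ :=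
  ∑ v : V, ((C.filter (fun S => v ∈ S)).card - 1)

/-- The number of edges on which two graphs differ. -/
noncomputable def editDiff {V : Type*} [Fintype V] (G H : SimpleGraph V) : ℕ :=
  (Finset.univ.filter (fun e : Sym2 V =>
    (e ∈ G.edgeSet ∧ e ∉ H.edgeSet) ∨ (e ∉ G.edgeSet ∧ e ∈ H.edgeSet))).card

/-- The minimum number of edit operations (edge additions, edge deletions and
inclusive vertex splits) of a solution of CEVS represented by the covering `C`. -/
noncomputable def cevsCost {V : Type*} [Fintype V] (G : SimpleGraph V)
    (C : Finset (Finset V)) : ℕ :=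
  splitCost C + editDiff G (clusterGraphOf C)

/-- `C` is a covering of the vertex set. -/
def IsCovering {V : Type*} (C : Finset (Finset V)) : Prop :=
  ∀ v : V, ∃ S ∈ C, v ∈ S

/-- `(G, k)` is a yes-instance of Cluster Editing with Vertex Splitting: some
covering of the vertex set (representing the clusters of the final cluster graph,
each set being the original vertices corresponding to one final clique) has edit
cost at most `k`. -/
noncomputable def CEVS {V : Type*} [Fintype V] (G : SimpleGraph V) (k : ℕ) : Prop :=
  ∃ C : Finset (Finset V), IsCovering C ∧ cevsCost G C ≤ k

/-- `C` is an optimal solution of CEVS on `G`: a covering of minimum edit cost. -/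
noncomputable def IsOptimalSolution {V : Type*} [Fintype V] (G : SimpleGraph V)
    (C : Finset (Finset V)) : Prop :=
  IsCovering C ∧ ∀ C' : Finset (Finset V), IsCovering C' → cevsCost G C ≤ cevsCost G C'



set_option linter.unusedSectionVars false

lemma clusterGraphOf_adj {V : Type*} (C : Finset (Finset V)) (u v : V) :
    (clusterGraphOf C).Adj u v ↔ u ≠ v ∧ ∃ S ∈ C, u ∈ S ∧ v ∈ S := by
  simp only [clusterGraphOf, SimpleGraph.fromRel_adj]
  constructor
  · rintro ⟨h, ⟨S, hS, h1, h2⟩ | ⟨S, hS, h1, h2⟩⟩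
    · exact ⟨h, S, hS, h1, h2⟩
    · exact ⟨h, S, hS, h2, h1⟩
  · rintro ⟨h, S, hS, h1, h2⟩; exact ⟨h, Or.inl ⟨S, hS, h1, h2⟩⟩

section Forward

variable {V : Type*} [Fintype V] {s : Set V}

lemma forward_adj (C : Finset (Finset V)) (x y : ↥sᶜ) :
    (clusterGraphOf (C.image (Finset.subtype (· ∈ sᶜ)))).Adj x y ↔
      (clusterGraphOf C).Adj x.1 y.1 := by
  rw [clusterGraphOf_adj, clusterGraphOf_adj]
  constructor
  · rintro ⟨hne, T, hT, hx, hy⟩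
    obtain ⟨S, hS, rfl⟩ := Finset.mem_image.mp hT
    exact ⟨fun h => hne (Subtype.ext h), S, hS,
      Finset.mem_subtype.mp hx, Finset.mem_subtype.mp hy⟩
  · rintro ⟨hne, S, hS, hx, hy⟩
    exact ⟨fun h => hne (congrArg Subtype.val h),
      Finset.subtype _ S, Finset.mem_image_of_mem _ hS,
      Finset.mem_subtype.mpr hx, Finset.mem_subtype.mpr hy⟩

lemma forward_cost (G : SimpleGraph V) (C : Finset (Finset V)) :
    cevsCost (G.induce sᶜ) (C.image (Finset.subtype (· ∈ sᶜ))) ≤ cevsCost G C := by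
  apply Nat.add_le_add
  · -- splitCost
    unfold splitCost
    refine le_trans (Finset.sum_le_sum
      (g := fun x : ↥sᶜ => (C.filter (fun S => x.1 ∈ S)).card - 1) (fun x _ => ?_)) ?_
    · apply Nat.sub_le_sub_right
      apply Finset.card_le_card_of_surjOn (Finset.subtype (· ∈ sᶜ))
      intro T hT
      simp only [Finset.coe_filter, Set.mem_setOf_eq] at hT
      obtain ⟨hT1, hx⟩ := hT
      obtain ⟨S, hS, rfl⟩ := Finset.mem_image.mp hT1
      exact ⟨S, by simp [Finset.mem_filter, hS, Finset.mem_subtype.mp hx], rfl⟩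
    rw [← Finset.sum_subtype (Finset.univ.filter (· ∈ sᶜ))
      (fun x => by simp) (fun v => (C.filter (fun S => v ∈ S)).card - 1)]
    exact Finset.sum_le_sum_of_subset (Finset.filter_subset _ _)
  · -- editDiff
    unfold editDiff
    apply Finset.card_le_card_of_injOn (Sym2.map Subtype.val)
    · intro e he
      induction e with
      | _ x y =>
        simp only [Finset.mem_coe, Finset.mem_filter, Finset.mem_univ, true_and,
          SimpleGraph.mem_edgeSet] at he ⊢
        rw [Sym2.map_pair_eq]
        have h1 : (G.induce sᶜ).Adj x y ↔ G.Adj x.1 y.1 := by simp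
        have h2 := forward_adj (s := s) C x y
        simp only [SimpleGraph.mem_edgeSet]
        rw [h1, h2] at he
        exact he
    · exact (Sym2.map.injective Subtype.val_injective).injOn
end Forward

section Backward

variable {V : Type*} [Fintype V] {s : Set V}

noncomputable def liftCov (s : Set V) [Fintype V] (C' : Finset (Finset ↥sᶜ)) :
    Finset (Finset V) :=
  insert s.toFinset (C'.image (fun T => T.image Subtype.val))

lemma mem_liftImage {T : Finset ↥sᶜ} {v : V} :
    v ∈ T.image Subtype.val ↔ ∃ h : v ∈ sᶜ, (⟨v, h⟩ : ↥sᶜ) ∈ T := by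
  simp only [Finset.mem_image]
  constructor
  · rintro ⟨a, ha, rfl⟩; exact ⟨a.2, by simpa using ha⟩
  · rintro ⟨h, hT⟩; exact ⟨⟨v, h⟩, hT, rfl⟩

lemma backward_cov {C' : Finset (Finset ↥sᶜ)} (hC' : IsCovering C') :
    IsCovering (liftCov s C') := by
  intro v
  by_cases hv : v ∈ s
  · exact ⟨s.toFinset, Finset.mem_insert_self _ _, Set.mem_toFinset.mpr hv⟩
  · obtain ⟨T, hT, hvT⟩ := hC' ⟨v, hv⟩
    exact ⟨T.image Subtype.val, Finset.mem_insert_of_mem (Finset.mem_image_of_mem _ hT),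
      mem_liftImage.mpr ⟨hv, hvT⟩⟩

lemma lift_filter_card (C' : Finset (Finset ↥sᶜ)) (x : ↥sᶜ) :
    ((liftCov s C').filter (fun S => x.1 ∈ S)).card = (C'.filter (fun T => x ∈ T)).card := by
  symm
  apply Finset.card_nbij (fun T => T.image Subtype.val)
  · intro T hT
    simp only [Finset.mem_coe, Finset.mem_filter] at hT ⊢
    exact ⟨Finset.mem_insert_of_mem (Finset.mem_image_of_mem _ hT.1),
      mem_liftImage.mpr ⟨x.2, hT.2⟩⟩
  · exact ((Finset.image_injective Subtype.val_injective).injOn)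
  · intro S hS
    simp only [Finset.coe_filter, Set.mem_setOf_eq] at hS
    obtain ⟨hS1, hxS⟩ := hS
    rcases Finset.mem_insert.mp hS1 with rfl | hS2
    · exact absurd (Set.mem_toFinset.mp hxS) x.2
    · obtain ⟨T, hT, rfl⟩ := Finset.mem_image.mp hS2
      obtain ⟨h, hxT⟩ := mem_liftImage.mp hxS
      refine ⟨T, ?_, rfl⟩
      simp only [Finset.coe_filter, Set.mem_setOf_eq]
      exact ⟨hT, by simpa using hxT⟩

lemma backward_split (C' : Finset (Finset ↥sᶜ)) :
    splitCost (liftCov s C') = splitCost C' := by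
  unfold splitCost
  rw [← Finset.sum_filter_add_sum_filter_not Finset.univ (· ∈ s)]
  have h1 : ∑ v ∈ Finset.univ.filter (· ∈ s),
      (((liftCov s C').filter (fun S => v ∈ S)).card - 1) = 0 := by
    apply Finset.sum_eq_zero
    intro v hv
    rw [Finset.mem_filter] at hv
    apply Nat.sub_eq_zero_of_le
    apply Finset.card_le_one.mpr
    intro S hS S' hS'
    simp only [Finset.mem_filter] at hS hS'
    have key : ∀ S ∈ liftCov s C', v ∈ S → S = s.toFinset := by
      intro S hSm hvS
      rcases Finset.mem_insert.mp hSm with rfl | hS2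
      · rfl
      · obtain ⟨T, _, rfl⟩ := Finset.mem_image.mp hS2
        exact absurd hv.2 (mem_liftImage.mp hvS).1
    rw [key S hS.1 hS.2, key S' hS'.1 hS'.2]
  rw [h1, zero_add]
  rw [Finset.sum_subtype (Finset.univ.filter (fun v => ¬ v ∈ s))
    (p := fun v => v ∈ sᶜ) (fun x => by simp)
    (fun v => ((liftCov s C').filter (fun S => v ∈ S)).card - 1)]
  apply Finset.sum_congr rfl
  intro x _
  rw [lift_filter_card]
  congr!

lemma lift_adj (C' : Finset (Finset ↥sᶜ)) (u v : V) (hu : u ∈ sᶜ) (hv : v ∈ sᶜ) :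
    (clusterGraphOf (liftCov s C')).Adj u v ↔ (clusterGraphOf C').Adj ⟨u, hu⟩ ⟨v, hv⟩ := by
  rw [clusterGraphOf_adj, clusterGraphOf_adj]
  constructor
  · rintro ⟨hne, S, hS, huS, hvS⟩
    refine ⟨fun h => hne (congrArg Subtype.val h), ?_⟩
    rcases Finset.mem_insert.mp hS with rfl | hS2
    · exact absurd (Set.mem_toFinset.mp huS) hu
    · obtain ⟨T, hT, rfl⟩ := Finset.mem_image.mp hS2
      obtain ⟨h1, huT⟩ := mem_liftImage.mp huS
      obtain ⟨h2, hvT⟩ := mem_liftImage.mp hvS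
      exact ⟨T, hT, huT, hvT⟩
  · rintro ⟨hne, T, hT, huT, hvT⟩
    exact ⟨fun h => hne (Subtype.ext h),
      T.image Subtype.val, Finset.mem_insert_of_mem (Finset.mem_image_of_mem _ hT),
      mem_liftImage.mpr ⟨hu, huT⟩, mem_liftImage.mpr ⟨hv, hvT⟩⟩

lemma diff_endpoints (G : SimpleGraph V)
    (hcomp : ∀ u ∈ s, ∀ v : V, v ∈ s ↔ G.Reachable u v)
    (hclique : G.IsClique s) (C' : Finset (Finset ↥sᶜ)) (u v : V)
    (h : (G.Adj u v ∧ ¬(clusterGraphOf (liftCov s C')).Adj u v) ∨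
      (¬G.Adj u v ∧ (clusterGraphOf (liftCov s C')).Adj u v)) :
    u ∈ sᶜ ∧ v ∈ sᶜ := by
  have mixed : ∀ a b : V, a ∈ s → b ∉ s →
      ¬G.Adj a b ∧ ¬(clusterGraphOf (liftCov s C')).Adj a b := by
    intro a b ha hb
    constructor
    · intro hadj
      exact hb ((hcomp a ha b).mpr hadj.reachable)
    · rw [clusterGraphOf_adj]
      rintro ⟨hne, S, hS, haS, hbS⟩
      rcases Finset.mem_insert.mp hS with rfl | hS2
      · exact hb (Set.mem_toFinset.mp hbS)
      · obtain ⟨T, _, rfl⟩ := Finset.mem_image.mp hS2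
        exact (mem_liftImage.mp haS).1 ha
  by_cases hu : u ∈ s
  · by_cases hv : v ∈ s
    · exfalso
      by_cases hne : u = v
      · subst hne
        rcases h with ⟨h1, _⟩ | ⟨_, h2⟩
        · exact G.irrefl h1
        · exact (clusterGraphOf _).irrefl h2
      · have hadj : G.Adj u v := hclique hu hv hne
        have hcl : (clusterGraphOf (liftCov s C')).Adj u v :=
          (clusterGraphOf_adj _ _ _).mpr ⟨hne, s.toFinset, Finset.mem_insert_self _ _,
            Set.mem_toFinset.mpr hu, Set.mem_toFinset.mpr hv⟩
        rcases h with ⟨_, h2⟩ | ⟨h1, _⟩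
        · exact h2 hcl
        · exact h1 hadj
    · exfalso
      obtain ⟨m1, m2⟩ := mixed u v hu hv
      rcases h with ⟨h1, _⟩ | ⟨_, h2⟩
      · exact m1 h1
      · exact m2 h2
  · by_cases hv : v ∈ s
    · exfalso
      obtain ⟨m1, m2⟩ := mixed v u hv hu
      rcases h with ⟨h1, _⟩ | ⟨_, h2⟩
      · exact m1 h1.symm
      · exact m2 h2.symm
    · exact ⟨hu, hv⟩

lemma backward_edit (G : SimpleGraph V)
    (hcomp : ∀ u ∈ s, ∀ v : V, v ∈ s ↔ G.Reachable u v)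
    (hclique : G.IsClique s) (C' : Finset (Finset ↥sᶜ)) :
    editDiff G (clusterGraphOf (liftCov s C')) =
      editDiff (G.induce sᶜ) (clusterGraphOf C') := by
  unfold editDiff
  symm
  apply Finset.card_nbij (Sym2.map Subtype.val)
  · intro e he
    induction e with
    | _ x y =>
      simp only [Finset.mem_coe, Finset.mem_filter, Finset.mem_univ, true_and,
        SimpleGraph.mem_edgeSet] at he ⊢
      rw [Sym2.map_pair_eq]
      simp only [SimpleGraph.mem_edgeSet]
      have h1 : (G.induce sᶜ).Adj x y ↔ G.Adj x.1 y.1 := by simp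
      have h2 := lift_adj (s := s) C' x.1 y.1 x.2 y.2
      rw [h1] at he
      rw [h2]
      simpa using he
  · exact (Sym2.map.injective Subtype.val_injective).injOn
  · intro e he
    simp only [Finset.coe_filter, Finset.mem_univ, true_and, Set.mem_setOf_eq,
      SimpleGraph.mem_edgeSet] at he
    induction e with
    | _ u v =>
      have hmem : u ∈ sᶜ ∧ v ∈ sᶜ := diff_endpoints G hcomp hclique C' u v he
      refine ⟨s(⟨u, hmem.1⟩, ⟨v, hmem.2⟩), ?_, by rw [Sym2.map_pair_eq]⟩
      simp only [Finset.coe_filter, Finset.mem_univ, true_and, Set.mem_setOf_eq,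
        SimpleGraph.mem_edgeSet]
      have h1 : (G.induce sᶜ).Adj ⟨u, hmem.1⟩ ⟨v, hmem.2⟩ ↔ G.Adj u v := by simp
      have h2 := lift_adj (s := s) C' u v hmem.1 hmem.2
      rw [h1, ← h2]
      exact he

end Backward

/-- Removing an isolated clique (a connected component `s` of `G` inducing a complete
graph) yields an equivalent CEVS instance: `(G, k)` is a yes-instance iff
`(G - s, k)` is. -/
theorem remove_isolated_clique {V : Type*} [Fintype V] (G : SimpleGraph V) (k : ℕ)
    (s : Set V) (hcomp : ∀ u ∈ s, ∀ v : V, v ∈ s ↔ G.Reachable u v)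
    (hclique : G.IsClique s) :
    CEVS G k ↔ CEVS (G.induce sᶜ) k := by
  constructor
  · rintro ⟨C, hC, hcost⟩
    refine ⟨C.image (Finset.subtype (· ∈ sᶜ)), ?_, le_trans (forward_cost G C) hcost⟩
    intro x
    obtain ⟨S, hS, hx⟩ := hC x.1
    exact ⟨Finset.subtype _ S, Finset.mem_image_of_mem _ hS, Finset.mem_subtype.mpr hx⟩
  · rintro ⟨C', hC', hcost⟩
    refine ⟨liftCov s C', backward_cov hC', ?_⟩
    calc cevsCost G (liftCov s C')
        = cevsCost (G.induce sᶜ) C' := by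
          unfold cevsCost
          rw [backward_split, backward_edit G hcomp hclique]
      _ ≤ k := hcost
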